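/- Let X and Y be locally compact Hausdorff spaces, K ⊆ X and L ⊆ Y compact sets, φ : X×Y → ℝ a continuous function with support contained in K×L, and ε > 0. Then there exist finitely many continuous functions α_1,…,α_n : X → ℝ with support contained in K and continuous functions β_1,…,β_n : Y → ℝ with support contained in L such that |φ(x,y) − Σ_{j=1}^n α_j(x)β_j(y)| ≤ ε for all (x,y) ∈ X×Y. -/
import Mathlib


open Topology

/-- Let `X` and `Y` be locally compact Hausdorff spaces, `K ⊆ X` and
`L ⊆ Y` compact sets, `φ : X × Y → ℝ` a continuous function with support contained in
`K ×ˢ L`, and `ε > 0`.  Then there exist finitely many continuous functions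
`α 0, …, α (n-1) : X → ℝ` with support contained in `K` and continuous functions
`β 0, …, β (n-1) : Y → ℝ` with support contained in `L` such that
`|φ (x, y) − ∑ j, α j x * β j y| ≤ ε` for all `(x, y) ∈ X × Y`. -/
theorem exists_sum_of_products_approximation
    (X Y : Type*) [TopologicalSpace X] [LocallyCompactSpace X] [T2Space X]
    [TopologicalSpace Y] [LocallyCompactSpace Y] [T2Space Y]
    (K : Set X) (L : Set Y) (hK : IsCompact K) (hL : IsCompact L)
    (φ : X × Y → ℝ) (hφ : Continuous φ) (hφs : tsupport φ ⊆ K ×ˢ L)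
    (ε : ℝ) (hε : 0 < ε) :
    ∃ (n : ℕ) (α : Fin n → X → ℝ) (β : Fin n → Y → ℝ),
      (∀ j, Continuous (α j) ∧ tsupport (α j) ⊆ K) ∧
      (∀ j, Continuous (β j) ∧ tsupport (β j) ⊆ L) ∧
      ∀ (x : X) (y : Y), |φ (x, y) - ∑ j, α j x * β j y| ≤ ε := by
  classical
  -- the support of φ, as a set, is open and contained in `interior K ×ˢ interior L`
  have hsupp_sub : Function.support φ ⊆ K ×ˢ L := subset_trans subset_closure hφs
  have hsupp_open : IsOpen (Function.support φ) := by
    have : Function.support φ = φ ⁻¹' ({0}ᶜ) := by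
      ext p; simp [Function.mem_support]
    rw [this]
    exact (isOpen_compl_singleton).preimage hφ
  have hsupp_int : Function.support φ ⊆ interior K ×ˢ interior L := by
    rw [← interior_prod_eq]
    exact interior_maximal hsupp_sub hsupp_open
  have hzero : ∀ p : X × Y, p ∉ Function.support φ → φ p = 0 := by
    intro p hp; by_contra h; exact hp h
  -- φ vanishes when y ∉ L
  have hzeroL : ∀ (x : X) (y : Y), y ∉ L → φ (x, y) = 0 := by
    intro x y hy
    apply hzero
    intro hmem
    exact hy (hsupp_sub hmem).2
  -- the compact set where |φ| is not small
  set C : Set (X × Y) := {p | ε / 2 ≤ |φ p|} with hCdef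
  have htsupp_cpt : IsCompact (tsupport φ) :=
    (hK.prod hL).of_isClosed_subset isClosed_closure hφs
  have hCsub : C ⊆ Function.support φ := by
    intro p hp
    have : ε / 2 ≤ |φ p| := hp
    intro h0
    rw [h0] at this; simp at this; linarith
  have hCclosed : IsClosed C := isClosed_le continuous_const (continuous_abs.comp hφ)
  have hCcpt : IsCompact C :=
    htsupp_cpt.of_isClosed_subset hCclosed (hCsub.trans subset_closure)
  set Cx : Set X := Prod.fst '' C with hCxdef
  have hCxcpt : IsCompact Cx := hCcpt.image continuous_fst
  -- neighborhoods where φ varies by at most ε/2 uniformly in y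
  have key : ∀ x ∈ Cx, ∃ N : Set X, IsOpen N ∧ x ∈ N ∧ N ⊆ interior K ∧
      ∀ x' ∈ N, ∀ y : Y, |φ (x', y) - φ (x, y)| ≤ ε / 2 := by
    intro x hx
    obtain ⟨p, hpC, hpx⟩ := hx
    have hxK : x ∈ interior K := by
      have := hsupp_int (hCsub hpC)
      exact hpx ▸ this.1
    set W : Set (X × Y) := {p : X × Y | |φ p - φ (x, p.2)| < ε / 2} with hWdef
    have hWopen : IsOpen W := by
      have hc : Continuous fun p : X × Y => |φ p - φ (x, p.2)| :=
        (hφ.sub (hφ.comp (continuous_const.prodMk continuous_snd))).abs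
      have : W = (fun p : X × Y => |φ p - φ (x, p.2)|) ⁻¹' (Set.Iio (ε / 2)) := rfl
      rw [this]
      exact isOpen_Iio.preimage hc
    have hsub : ({x} : Set X) ×ˢ L ⊆ W := by
      rintro ⟨x', y⟩ ⟨hx', hy⟩
      simp only [Set.mem_singleton_iff] at hx'
      subst hx'
      simp only [W, Set.mem_setOf_eq, sub_self, abs_zero]
      linarith
    obtain ⟨u, v, hu, hv, hxu, hLv, huv⟩ :=
      generalized_tube_lemma isCompact_singleton hL hWopen hsub
    refine ⟨u ∩ interior K, hu.inter isOpen_interior, ⟨hxu rfl, hxK⟩,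
      Set.inter_subset_right, ?_⟩
    intro x' hx' y
    by_cases hy : y ∈ L
    · have : (x', y) ∈ W := huv ⟨hx'.1, hLv hy⟩
      exact le_of_lt this
    · rw [hzeroL x' y hy, hzeroL x y hy]
      simp; linarith
  choose! N hNopen hNmem hNK hNapprox using key
  obtain ⟨T, hTmem, hTcov⟩ := hCxcpt.elim_nhds_subcover N
    (fun x hx => (hNopen x hx).mem_nhds (hNmem x hx))
  have hcov : Cx ⊆ ⋃ i : ↥T, N ↑i := by
    intro x hx
    obtain ⟨i, hi, hmem⟩ := Set.mem_iUnion₂.1 (hTcov hx)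
    exact Set.mem_iUnion.2 ⟨⟨i, hi⟩, hmem⟩
  obtain ⟨f, hfsub, -⟩ :=
    PartitionOfUnity.exists_isSubordinate_of_locallyFinite_t2space hCxcpt
      (fun i : ↥T => N ↑i) (fun i => hNopen _ (hTmem _ i.2))
      (locallyFinite_of_finite _) hcov
  set n := Fintype.card ↥T with hndef
  set e : Fin n ≃ ↥T := (Fintype.equivFin ↥T).symm with hedef
  refine ⟨n, fun j x => f (e j) x, fun j y => φ ((e j : X), y), ?_, ?_, ?_⟩
  · intro j
    refine ⟨(f (e j)).continuous, ?_⟩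
    exact (hfsub (e j)).trans ((hNK _ (hTmem _ (e j).2)).trans interior_subset)
  · intro j
    refine ⟨hφ.comp (continuous_const.prodMk continuous_id'), ?_⟩
    have hsup : Function.support (fun y => φ ((e j : X), y)) ⊆ L := by
      intro y hy
      exact (hsupp_sub hy).2
    calc tsupport (fun y => φ ((e j : X), y)) ⊆ closure L := closure_mono hsup
      _ = L := hL.isClosed.closure_eq
  · intro x y
    set s : ℝ := ∑ j : Fin n, f (e j) x with hsdef
    have hs_eq : s = ∑ᶠ i, f i x := by
      rw [hsdef, Equiv.sum_comp e (fun i : ↥T => f i x), finsum_eq_sum_of_fintype]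
    have hs_le : s ≤ 1 := by rw [hs_eq]; exact f.sum_le_one x
    have hs_nonneg : 0 ≤ s := Finset.sum_nonneg fun j _ => f.nonneg (e j) x
    have expand : φ (x, y) - ∑ j : Fin n, f (e j) x * φ ((e j : X), y) =
        (∑ j : Fin n, f (e j) x * (φ (x, y) - φ ((e j : X), y))) + (1 - s) * φ (x, y) := by
      simp only [mul_sub, Finset.sum_sub_distrib, ← Finset.sum_mul, hsdef]
      ring
    rw [expand]
    have term_bound : ∀ j : Fin n,
        |f (e j) x * (φ (x, y) - φ ((e j : X), y))| ≤ f (e j) x * (ε / 2) := by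
      intro j
      rcases eq_or_ne (f (e j) x) 0 with h0 | h0
      · rw [h0]; simp
      · have hxN : x ∈ N ((e j : X)) := (hfsub (e j)) (subset_closure h0)
        have hdiff : |φ (x, y) - φ ((e j : X), y)| ≤ ε / 2 :=
          hNapprox _ (hTmem _ (e j).2) x hxN y
        rw [abs_mul, abs_of_nonneg (f.nonneg (e j) x)]
        exact mul_le_mul_of_nonneg_left hdiff (f.nonneg (e j) x)
    have h1 : |∑ j : Fin n, f (e j) x * (φ (x, y) - φ ((e j : X), y))| ≤ ε / 2 := by
      calc |∑ j : Fin n, f (e j) x * (φ (x, y) - φ ((e j : X), y))|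
          ≤ ∑ j : Fin n, |f (e j) x * (φ (x, y) - φ ((e j : X), y))| :=
            Finset.abs_sum_le_sum_abs _ _
        _ ≤ ∑ j : Fin n, f (e j) x * (ε / 2) := Finset.sum_le_sum fun j _ => term_bound j
        _ = s * (ε / 2) := by rw [hsdef, Finset.sum_mul]
        _ ≤ 1 * (ε / 2) := mul_le_mul_of_nonneg_right hs_le (by linarith)
        _ = ε / 2 := one_mul _
    have h2 : |(1 - s) * φ (x, y)| ≤ ε / 2 := by
      by_cases hx : x ∈ Cx
      · have : s = 1 := by
          rw [hs_eq]; exact f.sum_eq_one hx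
        rw [this]; simp; linarith
      · have hphi : |φ (x, y)| ≤ ε / 2 := by
          by_contra h
          push_neg at h
          exact hx ⟨(x, y), le_of_lt h, rfl⟩
        rw [abs_mul]
        calc |1 - s| * |φ (x, y)| ≤ 1 * (ε / 2) := by
              apply mul_le_mul _ hphi (abs_nonneg _) zero_le_one
              rw [abs_of_nonneg (by linarith)]; linarith
          _ = ε / 2 := one_mul _
    calc |(∑ j : Fin n, f (e j) x * (φ (x, y) - φ ((e j : X), y))) + (1 - s) * φ (x, y)|
        ≤ |∑ j : Fin n, f (e j) x * (φ (x, y) - φ ((e j : X), y))| + |(1 - s) * φ (x, y)| :=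
          abs_add_le _ _
      _ ≤ ε / 2 + ε / 2 := add_le_add h1 h2
      _ = ε := by ring
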